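/- Let h(y) = (1/2)y + D₀·ψ(y)·(y − C₄'), where ψ(y) = C₂y + √(1−C₂²)√(1−y²) − C₃', with 0 ≤ C₂ < 1, D₀ > 0, C₃' ∈ [−1,1], C₄' ≤ C₂. Then h'(C₂) = 1/2 + D₀(1 − C₃') > 0, h''(y) ≤ 0 on [C₂, 1), and h'(y) → −∞ as y → 1⁻; hence there is a unique y* ∈ (C₂, 1) with h'(y*) = 0 and h' changes sign exactly once from positive to negative, so h is unimodal on [C₂, 1]. -/

import Mathlib

open Filter

/-- `ψ(y) = C₂y + √(1−C₂²)·√(1−y²) − C₃'`. -/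
noncomputable def psi (C2 C3' y : ℝ) : ℝ :=
  C2 * y + Real.sqrt (1 - C2^2) * Real.sqrt (1 - y^2) - C3'

/-- `h(y) = (1/2)y + D₀·ψ(y)·(y − C₄')`. -/
noncomputable def hfun (D0 C2 C3' C4' y : ℝ) : ℝ :=
  (1/2) * y + D0 * psi C2 C3' y * (y - C4')

noncomputable def sq1 (y : ℝ) : ℝ := Real.sqrt (1 - y^2)

noncomputable def hder (D0 C2 C3' C4' y : ℝ) : ℝ :=
  1/2 + D0 * (psi C2 C3' y + (y - C4') * (C2 - Real.sqrt (1 - C2^2) * (y / sq1 y)))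

lemma sq1_pos {y : ℝ} (hy : y^2 < 1) : 0 < sq1 y := Real.sqrt_pos.2 (by nlinarith)

lemma sq1_sq {y : ℝ} (hy : y^2 ≤ 1) : sq1 y ^ 2 = 1 - y^2 :=
  Real.sq_sqrt (by nlinarith)

lemma sq1_hasDeriv {y : ℝ} (hy : y^2 < 1) : HasDerivAt sq1 (-(y / sq1 y)) y := by
  have h0 : (1 - y^2) ≠ 0 := by nlinarith
  have hin : HasDerivAt (fun x : ℝ => 1 - x^2) (-(2*y)) y := by
    simpa using ((hasDerivAt_pow 2 y).const_sub 1)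
  have h := (Real.hasDerivAt_sqrt h0).comp y hin
  refine h.congr_deriv ?_
  have : sq1 y ≠ 0 := ne_of_gt (sq1_pos hy)
  unfold sq1 at this ⊢
  field_simp

lemma psi_hasDeriv (C2 C3' : ℝ) {y : ℝ} (hy : y^2 < 1) :
    HasDerivAt (psi C2 C3') (C2 - Real.sqrt (1 - C2^2) * (y / sq1 y)) y := by
  have h : HasDerivAt (fun y => C2 * y + Real.sqrt (1 - C2^2) * sq1 y - C3')
      (C2 * 1 + Real.sqrt (1 - C2^2) * (-(y / sq1 y))) y :=
    (((hasDerivAt_id y).const_mul C2).add ((sq1_hasDeriv hy).const_mul _)).sub_const C3'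
  refine h.congr_deriv ?_
  ring

lemma hfun_hasDeriv (D0 C2 C3' C4' : ℝ) {y : ℝ} (hy : y^2 < 1) :
    HasDerivAt (hfun D0 C2 C3' C4') (hder D0 C2 C3' C4' y) y := by
  have h : HasDerivAt (hfun D0 C2 C3' C4')
      ((1/2) * 1 + (D0 * (C2 - Real.sqrt (1 - C2^2) * (y / sq1 y)) * (y - C4')
        + D0 * psi C2 C3' y * 1)) y := by
    exact ((hasDerivAt_id y).const_mul (1/2)).add
      ((((psi_hasDeriv C2 C3' hy).const_mul D0).mul ((hasDerivAt_id y).sub_const C4')))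
  convert h using 1
  unfold hder; ring

lemma deriv_hfun_eq (D0 C2 C3' C4' : ℝ) {y : ℝ} (hy : y^2 < 1) :
    deriv (hfun D0 C2 C3' C4') y = hder D0 C2 C3' C4' y :=
  (hfun_hasDeriv D0 C2 C3' C4' hy).deriv

-- the derivative of y / sq1 y
lemma div_sq1_hasDeriv {y : ℝ} (hy : y^2 < 1) :
    HasDerivAt (fun y => y / sq1 y)
      ((1 * sq1 y - y * (-(y / sq1 y))) / (sq1 y)^2) y :=
  (hasDerivAt_id y).div (sq1_hasDeriv hy) (ne_of_gt (sq1_pos hy))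

lemma hder_hasDeriv (D0 C2 C3' C4' : ℝ) {y : ℝ} (hy : y^2 < 1) :
    HasDerivAt (hder D0 C2 C3' C4')
      (D0 * ((C2 - Real.sqrt (1 - C2^2) * (y / sq1 y))
        + ((C2 - Real.sqrt (1 - C2^2) * (y / sq1 y))
          + (y - C4') * (-(Real.sqrt (1 - C2^2) *
            ((1 * sq1 y - y * (-(y / sq1 y))) / (sq1 y)^2)))))) y := by
  have h2 : HasDerivAt (fun y => C2 - Real.sqrt (1 - C2^2) * (y / sq1 y))
      (-(Real.sqrt (1 - C2^2) * ((1 * sq1 y - y * (-(y / sq1 y))) / (sq1 y)^2))) y := by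
    simpa using (((div_sq1_hasDeriv hy).const_mul (Real.sqrt (1 - C2^2))).const_sub C2)
  have h : HasDerivAt (hder D0 C2 C3' C4')
      (D0 * ((C2 - Real.sqrt (1 - C2^2) * (y / sq1 y))
        + (1 * (C2 - Real.sqrt (1 - C2^2) * (y / sq1 y))
          + (y - C4') * (-(Real.sqrt (1 - C2^2) *
            ((1 * sq1 y - y * (-(y / sq1 y))) / (sq1 y)^2)))))) y := by
    exact (((psi_hasDeriv C2 C3' hy).add
      (((hasDerivAt_id y).sub_const C4').mul h2)).const_mul D0).const_add (1/2)
  convert h using 1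
  ring

lemma psider_key (C2 : ℝ) (hC2 : 0 ≤ C2) {y : ℝ} (hy1 : C2 ≤ y) (hy2 : y^2 < 1) :
    C2 * sq1 y ≤ Real.sqrt (1 - C2^2) * y := by
  have hs := sq1_pos hy2
  have hssq := sq1_sq hy2.le
  have ha2 : Real.sqrt (1 - C2^2) ^ 2 = 1 - C2^2 := Real.sq_sqrt (by nlinarith)
  have ha : 0 ≤ Real.sqrt (1 - C2^2) := Real.sqrt_nonneg _
  have hy0 : 0 ≤ y := le_trans hC2 hy1
  have h1 : (C2 * sq1 y)^2 ≤ (Real.sqrt (1 - C2^2) * y)^2 := by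
    rw [mul_pow, mul_pow, hssq, ha2]
    nlinarith [mul_self_le_mul_self hC2 hy1]
  nlinarith [mul_nonneg hC2 hs.le, mul_nonneg ha hy0]

lemma psider_key_lt (C2 : ℝ) (hC2 : 0 ≤ C2) {y : ℝ} (hy1 : C2 < y) (hy2 : y^2 < 1) :
    C2 * sq1 y < Real.sqrt (1 - C2^2) * y := by
  have hs := sq1_pos hy2
  have hssq := sq1_sq hy2.le
  have ha2 : Real.sqrt (1 - C2^2) ^ 2 = 1 - C2^2 := Real.sq_sqrt (by nlinarith)
  have ha : 0 < Real.sqrt (1 - C2^2) := Real.sqrt_pos.2 (by nlinarith)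
  have hy0 : 0 < y := lt_of_le_of_lt hC2 hy1
  have h1 : (C2 * sq1 y)^2 < (Real.sqrt (1 - C2^2) * y)^2 := by
    rw [mul_pow, mul_pow, hssq, ha2]
    nlinarith [mul_self_lt_mul_self hC2 hy1]
  nlinarith [mul_nonneg hC2 hs.le, mul_pos ha hy0]

lemma psider_nonpos (C2 : ℝ) (hC2 : 0 ≤ C2) {y : ℝ} (hy1 : C2 ≤ y) (hy2 : y^2 < 1) :
    C2 - Real.sqrt (1 - C2^2) * (y / sq1 y) ≤ 0 := by
  have hs := sq1_pos hy2
  have key := psider_key C2 hC2 hy1 hy2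
  rw [sub_nonpos, mul_div_assoc', le_div_iff₀ hs]
  linarith

lemma psider_neg (C2 : ℝ) (hC2 : 0 ≤ C2) {y : ℝ} (hy1 : C2 < y) (hy2 : y^2 < 1) :
    C2 - Real.sqrt (1 - C2^2) * (y / sq1 y) < 0 := by
  have hs := sq1_pos hy2
  have key := psider_key_lt C2 hC2 hy1 hy2
  rw [sub_neg, mul_div_assoc', lt_div_iff₀ hs]
  linarith

lemma deriv_hder_neg (D0 C2 C3' C4' : ℝ) (hC2 : 0 ≤ C2) (hD0 : 0 < D0) (hC4' : C4' ≤ C2)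
    {y : ℝ} (hy1 : C2 < y) (hy2 : y^2 < 1) :
    deriv (hder D0 C2 C3' C4') y < 0 := by
  rw [(hder_hasDeriv D0 C2 C3' C4' hy2).deriv]
  have hs := sq1_pos hy2
  have hw := psider_neg C2 hC2 hy1 hy2
  have hy0 : 0 ≤ y := le_trans hC2 hy1.le
  have hd : 0 < (1 * sq1 y - y * (-(y / sq1 y))) / (sq1 y)^2 := by
    apply div_pos _ (by positivity)
    have : 0 ≤ y * (y / sq1 y) := mul_nonneg hy0 (div_nonneg hy0 hs.le)
    nlinarith
  have ha : 0 ≤ Real.sqrt (1 - C2^2) := Real.sqrt_nonneg _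
  have h3 : (y - C4') * (-(Real.sqrt (1 - C2^2) *
      ((1 * sq1 y - y * (-(y / sq1 y))) / (sq1 y)^2))) ≤ 0 := by
    apply mul_nonpos_of_nonneg_of_nonpos (by linarith)
    simp only [neg_nonpos]
    positivity
  nlinarith

lemma deriv_hder_nonpos (D0 C2 C3' C4' : ℝ) (hC2 : 0 ≤ C2) (hD0 : 0 < D0) (hC4' : C4' ≤ C2)
    {y : ℝ} (hy1 : C2 ≤ y) (hy2 : y^2 < 1) :
    deriv (hder D0 C2 C3' C4') y ≤ 0 := by
  rw [(hder_hasDeriv D0 C2 C3' C4' hy2).deriv]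
  have hs := sq1_pos hy2
  have hw := psider_nonpos C2 hC2 hy1 hy2
  have hy0 : 0 ≤ y := le_trans hC2 hy1
  have h3 : (y - C4') * (-(Real.sqrt (1 - C2^2) *
      ((1 * sq1 y - y * (-(y / sq1 y))) / (sq1 y)^2))) ≤ 0 := by
    apply mul_nonpos_of_nonneg_of_nonpos (by linarith)
    simp only [neg_nonpos]
    have hnum : 0 ≤ 1 * sq1 y - y * (-(y / sq1 y)) := by
      have : 0 ≤ y * (y / sq1 y) := mul_nonneg hy0 (div_nonneg hy0 hs.le)
      nlinarith
    exact mul_nonneg (Real.sqrt_nonneg _) (div_nonneg hnum (by positivity))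
  nlinarith

lemma ev_eq (D0 C2 C3' C4' : ℝ) {y : ℝ} (hy : y^2 < 1) :
    deriv (hfun D0 C2 C3' C4') =ᶠ[nhds y] hder D0 C2 C3' C4' := by
  have h1 : -1 < y := by nlinarith
  have h2 : y < 1 := by nlinarith
  filter_upwards [Ioo_mem_nhds h1 h2] with x hx
  exact deriv_hfun_eq _ _ _ _ (by nlinarith [hx.1, hx.2])

lemma hder_at_left (D0 C2 C3' C4' : ℝ) (hC2 : 0 ≤ C2) (hC2' : C2 < 1) :
    hder D0 C2 C3' C4' C2 = 1/2 + D0 * (1 - C3') := by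
  have ha : 0 < Real.sqrt (1 - C2^2) := Real.sqrt_pos.2 (by nlinarith)
  have hsq : sq1 C2 = Real.sqrt (1 - C2^2) := rfl
  have ha2 : Real.sqrt (1 - C2^2) * Real.sqrt (1 - C2^2) = 1 - C2^2 :=
    Real.mul_self_sqrt (by nlinarith)
  unfold hder psi
  rw [hsq, mul_div_assoc', mul_comm (Real.sqrt (1 - C2^2)) C2, mul_div_assoc,
    div_self (ne_of_gt ha)]
  rw [show Real.sqrt (1 - C2^2) * Real.sqrt (1 - C2^2) = 1 - C2^2 from ha2]
  ring

lemma hfun_continuous (D0 C2 C3' C4' : ℝ) : Continuous (hfun D0 C2 C3' C4') := by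
  unfold hfun psi
  fun_prop

lemma tendsto_hder_atBot (D0 C2 C3' C4' : ℝ) (hC2 : 0 ≤ C2) (hC2' : C2 < 1) (hD0 : 0 < D0)
    (hC4' : C4' ≤ C2) :
    Tendsto (hder D0 C2 C3' C4') (nhdsWithin 1 (Set.Iio 1)) atBot := by
  set a := Real.sqrt (1 - C2^2) with ha_def
  have ha : 0 < a := Real.sqrt_pos.2 (by nlinarith)
  set A : ℝ → ℝ := fun y => 1/2 + D0 * (psi C2 C3' y + (y - C4') * C2) with hA
  set B : ℝ → ℝ := fun y => -(D0 * a) * (y - C4') with hB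
  have heq : ∀ y, hder D0 C2 C3' C4' y = A y + B y * (y / sq1 y) := by
    intro y; simp only [hA, hB, hder]; ring
  have hTA : Tendsto A (nhdsWithin 1 (Set.Iio 1)) (nhds (A 1)) := by
    apply Continuous.tendsto' _ _ _ rfl |>.mono_left nhdsWithin_le_nhds
    unfold A; unfold psi; fun_prop
  have hTB : Tendsto B (nhdsWithin 1 (Set.Iio 1)) (nhds (-(D0 * a) * (1 - C4'))) := by
    apply Continuous.tendsto' _ _ _ rfl |>.mono_left nhdsWithin_le_nhds
    unfold B; fun_prop
  have hc : -(D0 * a) * (1 - C4') < 0 := by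
    apply mul_neg_of_neg_of_pos (by nlinarith) (by linarith)
  have hsq : Tendsto sq1 (nhdsWithin 1 (Set.Iio 1)) (nhdsWithin 0 (Set.Ioi 0)) := by
    rw [tendsto_nhdsWithin_iff]
    constructor
    · have hc : Continuous sq1 := by unfold sq1; fun_prop
      have : sq1 1 = 0 := by simp [sq1]
      exact (hc.tendsto' 1 0 this).mono_left nhdsWithin_le_nhds
    · filter_upwards [Ioo_mem_nhdsLT_of_mem
        (show (1:ℝ) ∈ Set.Ioc (0:ℝ) 1 from ⟨by norm_num, le_refl _⟩)] with y hy
      exact sq1_pos (by nlinarith [hy.1, hy.2] : y^2 < 1)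
  have hinv : Tendsto (fun y => (sq1 y)⁻¹) (nhdsWithin 1 (Set.Iio 1)) atTop :=
    tendsto_inv_nhdsGT_zero.comp hsq
  have hT : Tendsto (fun y : ℝ => y / sq1 y) (nhdsWithin 1 (Set.Iio 1)) atTop := by
    simp only [div_eq_mul_inv]
    exact Tendsto.pos_mul_atTop zero_lt_one
      (tendsto_id.mono_left nhdsWithin_le_nhds) hinv
  have := hTA.add_atBot (hTB.neg_mul_atTop hc hT)
  exact this.congr (fun y => (heq y).symm)

/-- With `0 ≤ C₂ < 1`, `D₀ > 0`, `C₃' ∈ [−1,1]`, `C₄' ≤ C₂`: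
`h'(C₂) = 1/2 + D₀(1 − C₃') > 0`, `h'' ≤ 0` on `[C₂, 1)`, `h'(y) → −∞` as `y → 1⁻`;
hence there is a unique `y* ∈ (C₂, 1)` with `h'(y*) = 0`, `h'` changes sign exactly
once from positive to negative, and `h` is unimodal on `[C₂, 1]`. -/
theorem h_unimodal (D0 C2 C3' C4' : ℝ)
    (hC2 : 0 ≤ C2) (hC2' : C2 < 1) (hD0 : 0 < D0)
    (hC3' : C3' ∈ Set.Icc (-1 : ℝ) 1) (hC4' : C4' ≤ C2) :
    (deriv (hfun D0 C2 C3' C4') C2 = 1/2 + D0 * (1 - C3')) ∧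
    (0 < 1/2 + D0 * (1 - C3')) ∧
    (∀ y ∈ Set.Ico C2 1, deriv (deriv (hfun D0 C2 C3' C4')) y ≤ 0) ∧
    (Tendsto (deriv (hfun D0 C2 C3' C4')) (nhdsWithin 1 (Set.Iio 1)) atBot) ∧
    (∃! ystar : ℝ, ystar ∈ Set.Ioo C2 1 ∧ deriv (hfun D0 C2 C3' C4') ystar = 0) ∧
    (∃ ystar ∈ Set.Ioo C2 1,
      deriv (hfun D0 C2 C3' C4') ystar = 0 ∧
      (∀ y ∈ Set.Ico C2 ystar, 0 < deriv (hfun D0 C2 C3' C4') y) ∧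
      (∀ y ∈ Set.Ioo ystar 1, deriv (hfun D0 C2 C3' C4') y < 0) ∧
      MonotoneOn (hfun D0 C2 C3' C4') (Set.Icc C2 ystar) ∧
      AntitoneOn (hfun D0 C2 C3' C4') (Set.Icc ystar 1)) := by
  have hC2sq : C2^2 < 1 := by nlinarith
  have sqlt : ∀ {y : ℝ}, C2 ≤ y → y < 1 → y^2 < 1 := fun hy hy' => by nlinarith
  -- first bullet
  have d1 : deriv (hfun D0 C2 C3' C4') C2 = 1/2 + D0 * (1 - C3') := by
    rw [deriv_hfun_eq _ _ _ _ hC2sq, hder_at_left _ _ _ _ hC2 hC2']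
  have d2 : 0 < 1/2 + D0 * (1 - C3') := by
    have := hC3'.2
    nlinarith
  -- second derivative nonpos
  have d3 : ∀ y ∈ Set.Ico C2 1, deriv (deriv (hfun D0 C2 C3' C4')) y ≤ 0 := by
    intro y hy
    have hy2 : y^2 < 1 := sqlt hy.1 hy.2
    rw [(ev_eq D0 C2 C3' C4' hy2).deriv_eq]
    exact deriv_hder_nonpos D0 C2 C3' C4' hC2 hD0 hC4' hy.1 hy2
  -- tendsto
  have d4 : Tendsto (deriv (hfun D0 C2 C3' C4')) (nhdsWithin 1 (Set.Iio 1)) atBot := by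
    apply (tendsto_hder_atBot D0 C2 C3' C4' hC2 hC2' hD0 hC4').congr'
    filter_upwards [Ioo_mem_nhdsLT_of_mem
      (show (1:ℝ) ∈ Set.Ioc (-1:ℝ) 1 from ⟨by norm_num, le_refl _⟩)] with y hy
    exact (deriv_hfun_eq D0 C2 C3' C4' (by nlinarith [hy.1, hy.2])).symm
  -- continuity of the derivative on Ico C2 1
  have hcont : ContinuousOn (deriv (hfun D0 C2 C3' C4')) (Set.Ico C2 1) := by
    apply ContinuousOn.congr (f := hder D0 C2 C3' C4')
    · intro y hy
      exact ((hder_hasDeriv D0 C2 C3' C4' (sqlt hy.1 hy.2)).continuousAt).continuousWithinAt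
    · intro y hy
      exact deriv_hfun_eq D0 C2 C3' C4' (sqlt hy.1 hy.2)
  -- strict antitonicity of the derivative on Ico C2 1
  have hanti : StrictAntiOn (deriv (hfun D0 C2 C3' C4')) (Set.Ico C2 1) := by
    apply strictAntiOn_of_deriv_neg (convex_Ico C2 1) hcont
    intro y hy
    rw [interior_Ico] at hy
    have hy2 : y^2 < 1 := sqlt hy.1.le hy.2
    rw [(ev_eq D0 C2 C3' C4' hy2).deriv_eq]
    exact deriv_hder_neg D0 C2 C3' C4' hC2 hD0 hC4' hy.1 hy2
  -- find a point where deriv is negative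
  obtain ⟨y1, hy1mem, hy1neg⟩ : ∃ y1, y1 ∈ Set.Ioo C2 1 ∧
      deriv (hfun D0 C2 C3' C4') y1 < 0 := by
    have h1 : ∀ᶠ y in nhdsWithin 1 (Set.Iio 1), deriv (hfun D0 C2 C3' C4') y < 0 :=
      d4.eventually (eventually_lt_atBot 0)
    have h2 : ∀ᶠ y in nhdsWithin 1 (Set.Iio 1), y ∈ Set.Ioo C2 1 :=
      Ioo_mem_nhdsLT_of_mem (Set.mem_Ioc.2 ⟨hC2', le_refl _⟩)
    exact (h2.and h1).exists
  -- IVT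
  have hsub : Set.Icc C2 y1 ⊆ Set.Ico C2 1 := fun x hx =>
    ⟨hx.1, lt_of_le_of_lt hx.2 hy1mem.2⟩
  obtain ⟨ystar, hymem, hy0⟩ : ∃ y ∈ Set.Icc C2 y1, deriv (hfun D0 C2 C3' C4') y = 0 := by
    have := intermediate_value_Icc' (le_of_lt hy1mem.1) (hcont.mono hsub)
    have h0 : (0:ℝ) ∈ Set.Icc (deriv (hfun D0 C2 C3' C4') y1)
        (deriv (hfun D0 C2 C3' C4') C2) := ⟨hy1neg.le, by rw [d1]; exact d2.le⟩
    obtain ⟨y, hy, hyv⟩ := this h0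
    exact ⟨y, hy, hyv⟩
  have hystar : ystar ∈ Set.Ioo C2 1 := by
    refine ⟨lt_of_le_of_ne hymem.1 ?_, lt_of_le_of_lt hymem.2 hy1mem.2⟩
    intro h
    subst h
    rw [hy0] at d1
    linarith
  have hystarIco : ystar ∈ Set.Ico C2 1 := ⟨hystar.1.le, hystar.2⟩
  -- uniqueness
  have d5 : ∃! y : ℝ, y ∈ Set.Ioo C2 1 ∧ deriv (hfun D0 C2 C3' C4') y = 0 := by
    refine ⟨ystar, ⟨hystar, hy0⟩, ?_⟩
    rintro z ⟨hz, hz0⟩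
    exact hanti.injOn ⟨hz.1.le, hz.2⟩ hystarIco (by rw [hz0, hy0])
  -- signs
  have spos : ∀ y ∈ Set.Ico C2 ystar, 0 < deriv (hfun D0 C2 C3' C4') y := by
    intro y hy
    have : deriv (hfun D0 C2 C3' C4') ystar < deriv (hfun D0 C2 C3' C4') y :=
      hanti ⟨hy.1, lt_trans hy.2 hystar.2⟩ hystarIco hy.2
    rw [hy0] at this; exact this
  have sneg : ∀ y ∈ Set.Ioo ystar 1, deriv (hfun D0 C2 C3' C4') y < 0 := by
    intro y hy
    have : deriv (hfun D0 C2 C3' C4') y < deriv (hfun D0 C2 C3' C4') ystar :=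
      hanti hystarIco ⟨le_trans hystar.1.le hy.1.le, hy.2⟩ hy.1
    rw [hy0] at this; exact this
  -- monotone on [C2, ystar]
  have hmono : MonotoneOn (hfun D0 C2 C3' C4') (Set.Icc C2 ystar) := by
    apply monotoneOn_of_deriv_nonneg (convex_Icc C2 ystar)
      ((hfun_continuous D0 C2 C3' C4').continuousOn)
    · intro y hy
      rw [interior_Icc] at hy
      exact (hfun_hasDeriv D0 C2 C3' C4'
        (sqlt hy.1.le (lt_trans hy.2 hystar.2))).differentiableAt.differentiableWithinAt
    · intro y hy
      rw [interior_Icc] at hy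
      exact (spos y ⟨hy.1.le, hy.2⟩).le
  -- antitone on [ystar, 1]
  have hantit : AntitoneOn (hfun D0 C2 C3' C4') (Set.Icc ystar 1) := by
    apply antitoneOn_of_deriv_nonpos (convex_Icc ystar 1)
      ((hfun_continuous D0 C2 C3' C4').continuousOn)
    · intro y hy
      rw [interior_Icc] at hy
      exact (hfun_hasDeriv D0 C2 C3' C4'
        (sqlt (le_trans hystar.1.le hy.1.le) hy.2)).differentiableAt.differentiableWithinAt
    · intro y hy
      rw [interior_Icc] at hy
      exact (sneg y hy).le
  exact ⟨d1, d2, d3, d4, d5, ystar, hystar, hy0, spos, sneg, hmono, hantit⟩
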